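/- For every state ρ on ℂ^d ⊗ ℂ^d, D(ρ) ≥ √( (4/d)·( 1/(2 − D₂(ρ,𝓜)²) − 1/2 ) ), where D₂(ρ,𝓜) = inf{ ‖ρ − σ‖_F : σ ∈ 𝓜 } is the Frobenius-norm distance from ρ to the set 𝓜 of mixtures of maximally entangled states. -/

import Mathlib

open scoped BigOperators Matrix Kronecker ComplexOrder

noncomputable section

/-- Partial trace over the second tensor factor. -/
def ptrace2 (d : ℕ) (ρ : Matrix (Fin d × Fin d) (Fin d × Fin d) ℂ) :
    Matrix (Fin d) (Fin d) ℂ :=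
  Matrix.of fun i k => ∑ j, ρ (i, j) (k, j)

/-- The rank-one projector |ψ⟩⟨ψ|. -/
def outer {n : Type*} [Fintype n] (ψ : n → ℂ) : Matrix n n ℂ :=
  Matrix.of fun p q => ψ p * star (ψ q)

/-- Frobenius (Hilbert-Schmidt) norm of a complex matrix. -/
def frobNorm {m n : Type*} [Fintype m] [Fintype n] (X : Matrix m n ℂ) : ℝ :=
  Real.sqrt (∑ i, ∑ j, Complex.normSq (X i j))

/-- The maximally entangled unit vector |I⟩. -/
def maxEnt (d : ℕ) : Fin d × Fin d → ℂ :=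
  fun p => if p.1 = p.2 then (↑(Real.sqrt d))⁻¹ else 0

/-- The set 𝓜 of mixtures of maximally entangled pure states. -/
def MESet (d : ℕ) : Set (Matrix (Fin d × Fin d) (Fin d × Fin d) ℂ) :=
  { σ | ∃ (n : ℕ) (p : Fin n → ℝ) (U : Fin n → Matrix (Fin d) (Fin d) ℂ),
    (∀ j, 0 ≤ p j) ∧ (∑ j, p j = 1) ∧
    (∀ j, U j ∈ Matrix.unitaryGroup (Fin d) ℂ) ∧
    σ = ∑ j, (p j : ℂ) •
      ((U j ⊗ₖ (1 : Matrix (Fin d) (Fin d) ℂ)) * outer (maxEnt d) *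
        (U j ⊗ₖ (1 : Matrix (Fin d) (Fin d) ℂ))ᴴ) }

/-- The Frobenius-norm distance from ρ to 𝓜. -/
def D2dist (d : ℕ) (ρ : Matrix (Fin d × Fin d) (Fin d × Fin d) ℂ) : ℝ :=
  sInf { x : ℝ | ∃ σ ∈ MESet d, x = frobNorm (ρ - σ) }

/-- The distance functional D. -/
def DD (d : ℕ) (ρ : Matrix (Fin d × Fin d) (Fin d × Fin d) ℂ) : ℝ :=
  sInf { x : ℝ | ∃ (n : ℕ) (p : Fin n → ℝ) (ψ : Fin n → (Fin d × Fin d) → ℂ),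
    (∀ j, 0 ≤ p j) ∧ (∑ j, p j = 1) ∧
    (∀ j, ∑ q, Complex.normSq (ψ j q) = 1) ∧
    ρ = ∑ j, (p j : ℂ) • outer (ψ j) ∧
    x = ∑ j, p j * (Real.sqrt 2 * frobNorm (ptrace2 d (outer (ψ j)) - (d : ℂ)⁻¹ • 1)) }

/-! ### Auxiliary lemmas -/

section Aux

attribute [local instance] Matrix.frobeniusSeminormedAddCommGroup Matrix.frobeniusNormedSpace

lemma frobNorm_eq_norm {m n : Type*} [Fintype m] [Fintype n] (X : Matrix m n ℂ) :
    frobNorm X = ‖X‖ := by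
  rw [Matrix.frobenius_norm_def, frobNorm, Real.sqrt_eq_rpow]
  congr 1
  · simp [Complex.normSq_eq_norm_sq]

lemma frobNorm_nonneg {m n : Type*} [Fintype m] [Fintype n] (X : Matrix m n ℂ) :
    0 ≤ frobNorm X := Real.sqrt_nonneg _

lemma frobNorm_sq {m n : Type*} [Fintype m] [Fintype n] (X : Matrix m n ℂ) :
    frobNorm X ^ 2 = ∑ i, ∑ j, Complex.normSq (X i j) := by
  rw [frobNorm, Real.sq_sqrt]
  exact Finset.sum_nonneg fun i _ => Finset.sum_nonneg fun j _ => Complex.normSq_nonneg _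

lemma frobNorm_sum_le {m n ι : Type*} [Fintype m] [Fintype n] [Fintype ι]
    (f : ι → Matrix m n ℂ) : frobNorm (∑ j, f j) ≤ ∑ j, frobNorm (f j) := by
  simp only [frobNorm_eq_norm]
  exact norm_sum_le _ _

lemma frobNorm_real_smul {m n : Type*} [Fintype m] [Fintype n] (c : ℝ) (hc : 0 ≤ c)
    (X : Matrix m n ℂ) : frobNorm ((c : ℂ) • X) = c * frobNorm X := by
  simp only [frobNorm_eq_norm, norm_smul, Complex.norm_real, Real.norm_eq_abs, abs_of_nonneg hc]

end Aux

lemma outer_sub_outer_sq {n : Type*} [Fintype n] (ψ φ : n → ℂ)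
    (hψ : ∑ q, Complex.normSq (ψ q) = 1) (hφ : ∑ q, Complex.normSq (φ q) = 1) :
    frobNorm (outer ψ - outer φ) ^ 2
      = 2 - 2 * Complex.normSq (∑ q, star (φ q) * ψ q) := by
  rw [frobNorm_sq]
  set f : n → ℂ := fun p => ψ p * star (φ p) with hf
  have key : ∀ p q : n, Complex.normSq ((outer ψ - outer φ) p q)
      = Complex.normSq (ψ p) * Complex.normSq (ψ q)
        + Complex.normSq (φ p) * Complex.normSq (φ q)
        - 2 * (f p * star (f q)).re := by
    intro p q
    have h2 : ψ p * star (ψ q) * star (φ p * star (φ q)) = f p * star (f q) := by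
      simp only [hf, star_mul, star_star]; ring
    simp only [outer, Matrix.sub_apply, Matrix.of_apply, Complex.normSq_sub,
      Complex.normSq_mul, starRingEnd_apply, Complex.normSq_conj, h2]
    rw [show Complex.normSq (star (ψ q)) = Complex.normSq (ψ q) from Complex.normSq_conj _,
      show Complex.normSq (star (φ q)) = Complex.normSq (φ q) from Complex.normSq_conj _]
  have hre : (∑ p : n, ∑ q : n, (f p * star (f q)).re)
      = ((∑ p, f p) * star (∑ q, f q)).re := by
    rw [star_sum, Finset.sum_mul_sum, Complex.re_sum]
    exact Finset.sum_congr rfl fun p _ => (Complex.re_sum _ _).symm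
  have hsum : (∑ p : n, ∑ q : n, Complex.normSq ((outer ψ - outer φ) p q))
      = (∑ p : n, Complex.normSq (ψ p)) * (∑ q : n, Complex.normSq (ψ q))
        + (∑ p : n, Complex.normSq (φ p)) * (∑ q : n, Complex.normSq (φ q))
        - 2 * (((∑ p, f p) * star (∑ q, f q)).re) := by
    simp only [key, Finset.sum_sub_distrib, Finset.sum_add_distrib, ← Finset.sum_mul,
      ← Finset.mul_sum]
    rw [hre]
  rw [hsum, hψ, hφ]
  have h3 : (∑ q, star (φ q) * ψ q) = ∑ p, f p :=
    Finset.sum_congr rfl fun p _ => by rw [hf]; ring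
  rw [h3, show ((∑ p, f p) * star (∑ q, f q)).re = Complex.normSq (∑ p, f p) by
    rw [← starRingEnd_apply, Complex.mul_conj, Complex.ofReal_re]]
  ring

lemma trace_conjTranspose_mul {n : Type*} [Fintype n] (B C : Matrix n n ℂ) :
    (Bᴴ * C).trace = ∑ i, ∑ j, star (B j i) * C j i := by
  simp [Matrix.trace, Matrix.diag, Matrix.mul_apply, Matrix.conjTranspose_apply]

lemma frobNorm_sq_eq_trace {m n : Type*} [Fintype m] [Fintype n] (X : Matrix m n ℂ) :
    frobNorm X ^ 2 = (Matrix.trace (X * Xᴴ)).re := by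
  rw [frobNorm_sq, Matrix.trace]
  rw [Complex.re_sum]
  refine Finset.sum_congr rfl fun i _ => ?_
  rw [Matrix.diag_apply, Matrix.mul_apply, Complex.re_sum]
  refine Finset.sum_congr rfl fun j _ => ?_
  rw [Matrix.conjTranspose_apply, ← starRingEnd_apply, Complex.mul_conj, Complex.ofReal_re]

lemma sum_sqrt_sq_mul_sum_sq {n : Type*} [Fintype n] (μ : n → ℝ) (hμ : ∀ i, 0 ≤ μ i)
    (hsum : ∑ i, μ i = 1) :
    1 ≤ (∑ i, Real.sqrt (μ i)) ^ 2 * (∑ i, (μ i) ^ 2) := by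
  classical
  set c : n → ℝ := fun i => Real.sqrt (Real.sqrt (μ i)) with hc
  have hc2 : ∀ i, c i ^ 2 = Real.sqrt (μ i) := fun i => Real.sq_sqrt (Real.sqrt_nonneg _)
  have hc4 : ∀ i, c i ^ 4 = μ i := by
    intro i
    calc c i ^ 4 = (c i ^ 2) ^ 2 := by ring
    _ = μ i := by rw [hc2 i]; exact Real.sq_sqrt (hμ i)
  have hA : (∑ i, Real.sqrt (μ i)) = ∑ i, c i ^ 2 :=
    Finset.sum_congr rfl fun i _ => (hc2 i).symm
  have hB : (∑ i, c i ^ 4 : ℝ) = 1 := by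
    rw [← hsum]; exact Finset.sum_congr rfl fun i _ => hc4 i
  have hE : (∑ i, μ i ^ 2) = ∑ i, c i ^ 8 := by
    refine Finset.sum_congr rfl fun i _ => ?_
    rw [← hc4 i]; ring
  set A := ∑ i, c i ^ 2 with hAdef
  set C := ∑ i, c i ^ 6 with hCdef
  set E := ∑ i, c i ^ 8 with hEdef
  have cs1 : (∑ i, c i ^ 4) ^ 2 ≤ A * C := by
    have h := Finset.sum_mul_sq_le_sq_mul_sq Finset.univ c (fun i => c i ^ 3)
    have e1 : (∑ i, c i * c i ^ 3) = ∑ i, c i ^ 4 := Finset.sum_congr rfl fun i _ => by ring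
    have e2 : (∑ i, (c i ^ 3) ^ 2) = C := Finset.sum_congr rfl fun i _ => by ring
    rw [e1, e2] at h; exact h
  have cs2 : C ^ 2 ≤ E := by
    have h := Finset.sum_mul_sq_le_sq_mul_sq Finset.univ (fun i => c i ^ 2) (fun i => c i ^ 4)
    have e1 : (∑ i, c i ^ 2 * c i ^ 4) = C := Finset.sum_congr rfl fun i _ => by ring
    have e2 : (∑ i, (c i ^ 2) ^ 2) = (1 : ℝ) := by
      rw [← hB]; exact Finset.sum_congr rfl fun i _ => by ring
    have e3 : (∑ i, (c i ^ 4) ^ 2) = E := Finset.sum_congr rfl fun i _ => by ring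
    rw [e1, e2, e3, one_mul] at h; exact h
  have h1 : 1 ≤ A * C := by rw [hB] at cs1; simpa using cs1
  have h3 : (1 : ℝ) ≤ (A * C) ^ 2 := by nlinarith [h1]
  rw [hA, hE]
  calc (1 : ℝ) ≤ (A * C) ^ 2 := h3
  _ = A ^ 2 * C ^ 2 := by ring
  _ ≤ A ^ 2 * E := mul_le_mul_of_nonneg_left cs2 (sq_nonneg A)

lemma tangent_bound (D u t : ℝ) (hD : 0 < D) (hu : 0 ≤ u) (ht : 0 ≤ t) :
    Real.sqrt (2*D*u^2/(2+D*u^2)) ≤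
      Real.sqrt (2*D) * (2*u + D*t^3) / ((2+D*t^2) * Real.sqrt (2+D*t^2)) := by
  have h2u : (0:ℝ) < 2 + D*u^2 := by positivity
  have h2t : (0:ℝ) < 2 + D*t^2 := by positivity
  have hnum : 0 ≤ 2*u + D*t^3 := by positivity
  have hRHS : 0 ≤ Real.sqrt (2*D) * (2*u + D*t^3) / ((2+D*t^2) * Real.sqrt (2+D*t^2)) := by
    positivity
  rw [show Real.sqrt (2*D) * (2*u + D*t^3) / ((2+D*t^2) * Real.sqrt (2+D*t^2))
    = Real.sqrt ((Real.sqrt (2*D) * (2*u + D*t^3) / ((2+D*t^2) * Real.sqrt (2+D*t^2)))^2)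
    from (Real.sqrt_sq hRHS).symm]
  apply Real.sqrt_le_sqrt
  rw [div_pow, mul_pow, mul_pow, Real.sq_sqrt (by positivity : (0:ℝ) ≤ 2*D),
    Real.sq_sqrt h2t.le]
  rw [div_le_div_iff₀ h2u (by positivity)]
  have hb : 0 ≤ 2*u*(u+2*t) + D*t^3*(2*u+t) := by
    have h1 : 0 ≤ 2*u*(u+2*t) := by positivity
    have h2 : 0 ≤ D*t^3*(2*u+t) := by positivity
    linarith
  have hprod : 0 ≤ 2*D*(u-t)^2*(2*u*(u+2*t) + D*t^3*(2*u+t)) := by positivity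
  nlinarith [hprod]

lemma conj_outer {n : Type*} [Fintype n] (B : Matrix n n ℂ) (v : n → ℂ) :
    B * outer v * Bᴴ = outer (B.mulVec v) := by
  ext p q
  simp only [outer, Matrix.mul_apply, Matrix.of_apply, Matrix.conjTranspose_apply,
    Matrix.mulVec, dotProduct]
  rw [star_sum, Finset.sum_mul_sum]
  rw [Finset.sum_comm]
  refine Finset.sum_congr rfl fun r _ => ?_
  rw [Finset.sum_mul]
  refine Finset.sum_congr rfl fun s _ => ?_
  rw [star_mul']
  ring

lemma kron_mulVec_maxEnt (d : ℕ) (U : Matrix (Fin d) (Fin d) ℂ) (i j : Fin d) :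
    ((U ⊗ₖ (1 : Matrix (Fin d) (Fin d) ℂ)).mulVec (maxEnt d)) (i, j)
      = (↑(Real.sqrt d) : ℂ)⁻¹ * U i j := by
  simp only [Matrix.mulVec, dotProduct, Fintype.sum_prod_type,
    Matrix.kroneckerMap_apply, Matrix.one_apply, maxEnt]
  rw [Finset.sum_comm]
  rw [Finset.sum_eq_single j]
  · rw [Finset.sum_eq_single j]
    · simp [mul_comm]
    · intro k _ hk
      simp [hk, Ne.symm hk]
    · intro h; exact absurd (Finset.mem_univ j) h
  · intro l _ hl
    apply Finset.sum_eq_zero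
    intro k _
    by_cases hkl : k = l
    · subst hkl
      simp [Ne.symm hl]
    · simp [hkl]
  · intro h; exact absurd (Finset.mem_univ j) h

lemma kron_maxEnt_norm (d : ℕ) (hd : 0 < d) (U : Matrix (Fin d) (Fin d) ℂ)
    (hU : U ∈ Matrix.unitaryGroup (Fin d) ℂ) :
    ∑ q, Complex.normSq (((U ⊗ₖ (1 : Matrix (Fin d) (Fin d) ℂ)).mulVec (maxEnt d)) q) = 1 := by
  rw [Fintype.sum_prod_type]
  have hent : ∀ i j : Fin d,
      Complex.normSq (((U ⊗ₖ (1 : Matrix (Fin d) (Fin d) ℂ)).mulVec (maxEnt d)) (i, j))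
      = (d : ℝ)⁻¹ * Complex.normSq (U i j) := by
    intro i j
    rw [kron_mulVec_maxEnt, Complex.normSq_mul, Complex.normSq_inv, Complex.normSq_ofReal,
      Real.mul_self_sqrt (Nat.cast_nonneg d)]
  simp only [hent, ← Finset.mul_sum]
  have hUU : U * star U = 1 := Matrix.mem_unitaryGroup_iff.mp hU
  have htr : (∑ i : Fin d, ∑ j : Fin d, Complex.normSq (U i j) : ℝ) = d := by
    have h1 : ((U * Uᴴ).trace : ℂ) = (d : ℂ) := by
      rw [← Matrix.star_eq_conjTranspose, hUU, Matrix.trace_one]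
      try simp
    have h2 : ((U * Uᴴ).trace : ℂ)
        = ((∑ i : Fin d, ∑ j : Fin d, Complex.normSq (U i j) : ℝ) : ℂ) := by
      rw [Matrix.trace]
      push_cast
      refine Finset.sum_congr rfl fun i _ => ?_
      rw [Matrix.diag_apply, Matrix.mul_apply]
      refine Finset.sum_congr rfl fun j _ => ?_
      rw [Matrix.conjTranspose_apply, ← starRingEnd_apply, Complex.mul_conj]
      try rfl
    rw [h2] at h1
    exact_mod_cast h1
  rw [htr]
  field_simp

set_option maxHeartbeats 1000000 in
lemma exists_good_unitary (d : ℕ) (hd : 0 < d) (ψ : Fin d × Fin d → ℂ)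
    (hψ : ∑ q, Complex.normSq (ψ q) = 1) :
    ∃ U ∈ Matrix.unitaryGroup (Fin d) ℂ,
      1 / (1 + d * frobNorm (ptrace2 d (outer ψ) - (d : ℂ)⁻¹ • 1) ^ 2)
        ≤ Complex.normSq (∑ q, star (((U ⊗ₖ (1 : Matrix (Fin d) (Fin d) ℂ)).mulVec (maxEnt d)) q) * ψ q) := by
  classical
  set M : Matrix (Fin d) (Fin d) ℂ := Matrix.of (fun i j => ψ (i, j)) with hM
  have hpt : ptrace2 d (outer ψ) = M * Mᴴ := by
    ext i k
    simp [ptrace2, outer, Matrix.mul_apply, Matrix.conjTranspose_apply, hM]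
  have hPSD : (M * Mᴴ).PosSemidef := Matrix.posSemidef_self_mul_conjTranspose M
  have hH : (M * Mᴴ).IsHermitian := hPSD.isHermitian
  set μ : Fin d → ℝ := hH.eigenvalues with hμdef
  have hμ0 : ∀ i, 0 ≤ μ i := hPSD.eigenvalues_nonneg
  set V : Matrix (Fin d) (Fin d) ℂ := (hH.eigenvectorUnitary : Matrix (Fin d) (Fin d) ℂ) with hV
  have hVmem : V ∈ Matrix.unitaryGroup (Fin d) ℂ := hH.eigenvectorUnitary.2
  have hVHV : Vᴴ * V = 1 := by
    rw [← Matrix.star_eq_conjTranspose]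
    exact (Unitary.mem_iff.mp hVmem).1
  have hVVH : V * Vᴴ = 1 := by
    rw [← Matrix.star_eq_conjTranspose]
    exact (Unitary.mem_iff.mp hVmem).2
  have hspec : M * Mᴴ = V * Matrix.diagonal (fun i => (μ i : ℂ)) * Vᴴ := by
    have h := hH.spectral_theorem
    simp only [Unitary.conjStarAlgAut_apply, Unitary.coe_star, Matrix.star_eq_conjTranspose] at h
    exact h
  set N : Matrix (Fin d) (Fin d) ℂ := Vᴴ * M with hN
  have hMN : M = V * N := by rw [hN, ← Matrix.mul_assoc, hVVH, Matrix.one_mul]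
  have hNNH : N * Nᴴ = Matrix.diagonal (fun i => (μ i : ℂ)) := by
    calc N * Nᴴ = Vᴴ * (M * Mᴴ * V) := by
          rw [hN, Matrix.conjTranspose_mul, Matrix.conjTranspose_conjTranspose]
          simp only [Matrix.mul_assoc]
    _ = Vᴴ * (V * (Matrix.diagonal (fun i => (μ i : ℂ)) * (Vᴴ * V))) := by
          rw [hspec]; simp only [Matrix.mul_assoc]
    _ = Matrix.diagonal (fun i => (μ i : ℂ)) := by
          rw [hVHV, Matrix.mul_one, ← Matrix.mul_assoc, hVHV, Matrix.one_mul]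
  have hrow : ∀ i k, (∑ j, N i j * star (N k j)) = if i = k then (μ i : ℂ) else 0 := by
    intro i k
    have h := congrArg (fun X => X i k) hNNH
    simpa [Matrix.mul_apply, Matrix.conjTranspose_apply, Matrix.diagonal_apply] using h
  set r : Fin d → EuclideanSpace ℂ (Fin d) :=
    fun i => (WithLp.equiv 2 (Fin d → ℂ)).symm (fun j => N i j) with hr
  have hrinner : ∀ i k, (inner ℂ (r i) (r k) : ℂ) = if i = k then (μ i : ℂ) else 0 := by
    intro i k
    rw [PiLp.inner_apply]
    simp only [hr, WithLp.equiv_symm_apply, WithLp.ofLp_toLp, RCLike.inner_apply', starRingEnd_apply]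
    rw [show (∑ j, star (N i j) * N k j) = ∑ j, N k j * star (N i j) from
      Finset.sum_congr rfl fun j _ => mul_comm _ _, hrow k i]
    by_cases h : i = k
    · subst h; simp
    · simp [h, Ne.symm h]
  set sS : Set (Fin d) := {i | μ i ≠ 0} with hsS
  set v : Fin d → EuclideanSpace ℂ (Fin d) :=
    fun i => (((Real.sqrt (μ i))⁻¹ : ℝ) : ℂ) • r i with hv
  have horm : Orthonormal ℂ (sS.restrict v) := by
    rw [orthonormal_iff_ite]
    rintro ⟨i, hi⟩ ⟨k, hk⟩
    simp only [Set.restrict, Set.domRestrict_apply, hv]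
    rw [inner_smul_left, inner_smul_right, hrinner i k]
    by_cases h : i = k
    · subst h
      have hμi : 0 < μ i := lt_of_le_of_ne (hμ0 i) (Ne.symm hi)
      have h1 : ((Real.sqrt (μ i))⁻¹ : ℝ) * ((Real.sqrt (μ i))⁻¹ * μ i) = 1 := by
        rw [show (μ i : ℝ) = Real.sqrt (μ i) * Real.sqrt (μ i) from
          (Real.mul_self_sqrt (hμ0 i)).symm]
        have hs : Real.sqrt (μ i) ≠ 0 := by positivity
        field_simp
        rw [Real.sqrt_sq (Real.sqrt_nonneg _)]
      simp only [if_pos rfl, Complex.conj_ofReal, if_true]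
      rw [← Complex.ofReal_mul, ← Complex.ofReal_mul, h1, Complex.ofReal_one]
    · simp [h]
  obtain ⟨b, hb⟩ := Orthonormal.exists_orthonormalBasis_extension_of_card_eq
    (by simp [finrank_euclideanSpace]) horm
  set Q : Matrix (Fin d) (Fin d) ℂ := Matrix.of (fun i j => b i j) with hQ
  have hQmem : Q ∈ Matrix.unitaryGroup (Fin d) ℂ := by
    rw [Matrix.mem_unitaryGroup_iff]
    ext i k
    rw [Matrix.star_eq_conjTranspose, Matrix.mul_apply]
    have hbo := orthonormal_iff_ite.mp b.orthonormal k i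
    rw [PiLp.inner_apply] at hbo
    simp only [RCLike.inner_apply', starRingEnd_apply] at hbo
    simp only [hQ, Matrix.of_apply, Matrix.conjTranspose_apply, Matrix.one_apply]
    rw [show (∑ j, b i j * star (b k j)) = ∑ j, star (b k j) * b i j from
      Finset.sum_congr rfl fun j _ => mul_comm _ _, hbo]
    by_cases h : i = k
    · subst h; simp
    · simp [h, Ne.symm h]
  refine ⟨V * Q, Submonoid.mul_mem _ hVmem hQmem, ?_⟩
  -- row sums against Q give sqrt of eigenvalues
  have hsumQ : ∀ i, (∑ j, star (Q i j) * N i j) = (inner ℂ (b i) (r i) : ℂ) := by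
    intro i
    rw [PiLp.inner_apply]
    refine Finset.sum_congr rfl fun j _ => ?_
    rw [RCLike.inner_apply', starRingEnd_apply]
    rfl
  have hQN : ∀ i, (∑ j, star (Q i j) * N i j) = ((Real.sqrt (μ i) : ℝ) : ℂ) := by
    intro i
    by_cases hi : i ∈ sS
    · have hbi : b i = v i := hb i hi
      have hμi : 0 < μ i := lt_of_le_of_ne (hμ0 i) (Ne.symm hi)
      have hs : Real.sqrt (μ i) ≠ 0 := by positivity
      have hri : r i = ((Real.sqrt (μ i) : ℝ) : ℂ) • v i := by
        rw [hv]
        simp only [smul_smul]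
        rw [← Complex.ofReal_mul, mul_inv_cancel₀ hs, Complex.ofReal_one, one_smul]
      have hvv : (inner ℂ (v i) (v i) : ℂ) = 1 := by
        have := orthonormal_iff_ite.mp horm ⟨i, hi⟩ ⟨i, hi⟩
        rw [if_pos rfl] at this; exact this
      rw [hsumQ i, hri, inner_smul_right, hbi, hvv, mul_one]
    · have hμz : μ i = 0 := by
        by_contra hne
        exact hi hne
      have hr0 : r i = 0 := by
        rw [← @inner_self_eq_zero ℂ]
        rw [hrinner i i]
        simp [hμz]
      rw [hsumQ i, hr0, inner_zero_right]
      simp [hμz]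
  -- the overlap sum
  have hφ : ∀ i j, (((V * Q) ⊗ₖ (1 : Matrix (Fin d) (Fin d) ℂ)).mulVec (maxEnt d)) (i, j)
      = (↑(Real.sqrt d) : ℂ)⁻¹ * (V * Q) i j := by
    intro i j
    simp only [Matrix.mulVec, dotProduct, Fintype.sum_prod_type,
      Matrix.kroneckerMap_apply, Matrix.one_apply, maxEnt]
    rw [Finset.sum_comm]
    rw [Finset.sum_eq_single j]
    · rw [Finset.sum_eq_single j]
      · simp [mul_comm]
      · intro k _ hk
        simp [hk, Ne.symm hk]
      · intro h; exact absurd (Finset.mem_univ j) h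
    · intro l _ hl
      apply Finset.sum_eq_zero
      intro k _
      by_cases hkl : k = l
      · subst hkl
        simp [Ne.symm hl]
      · simp [hkl]
    · intro h; exact absurd (Finset.mem_univ j) h
  have htrQN : (∑ i, ∑ j, star ((V * Q) i j) * M i j) = ((∑ i, Real.sqrt (μ i) : ℝ) : ℂ) := by
    have e1 : (∑ i, ∑ j, star ((V * Q) i j) * M i j) = ((V * Q)ᴴ * M).trace := by
      rw [trace_conjTranspose_mul]
      rw [Finset.sum_comm]
    have e2 : ((V * Q)ᴴ * M) = Qᴴ * N := by
      rw [Matrix.conjTranspose_mul, hN, Matrix.mul_assoc]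
    rw [e1, e2, trace_conjTranspose_mul]
    rw [Finset.sum_comm]
    push_cast
    exact Finset.sum_congr rfl fun i _ => hQN i
  have hval : (∑ q : Fin d × Fin d,
        star ((((V * Q) ⊗ₖ (1 : Matrix (Fin d) (Fin d) ℂ)).mulVec (maxEnt d)) q) * ψ q)
      = (↑(Real.sqrt d) : ℂ)⁻¹ * ((∑ i, Real.sqrt (μ i) : ℝ) : ℂ) := by
    rw [Fintype.sum_prod_type]
    have : ∀ i j, star ((((V * Q) ⊗ₖ (1 : Matrix (Fin d) (Fin d) ℂ)).mulVec (maxEnt d)) (i, j)) * ψ (i, j)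
        = (↑(Real.sqrt d) : ℂ)⁻¹ * (star ((V * Q) i j) * M i j) := by
      intro i j
      rw [hφ i j, star_mul']
      have : star ((↑(Real.sqrt d) : ℂ)⁻¹) = (↑(Real.sqrt d) : ℂ)⁻¹ := by
        rw [star_inv₀, Complex.star_def, Complex.conj_ofReal]
      rw [this]
      have hM2 : M i j = ψ (i, j) := rfl
      rw [← hM2]
      ring
    simp only [this, ← Finset.mul_sum]
    rw [htrQN]
  rw [hval]
  have hnsq : Complex.normSq ((↑(Real.sqrt d) : ℂ)⁻¹ * ((∑ i, Real.sqrt (μ i) : ℝ) : ℂ))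
      = (∑ i, Real.sqrt (μ i)) ^ 2 / d := by
    rw [Complex.normSq_mul, Complex.normSq_inv, Complex.normSq_ofReal, Complex.normSq_ofReal]
    rw [Real.mul_self_sqrt (Nat.cast_nonneg d)]
    rw [div_eq_mul_inv]
    ring
  rw [hnsq]
  -- Frobenius norm computation
  set g : Fin d → ℂ := fun i => (((μ i - (d : ℝ)⁻¹ : ℝ)) : ℂ) with hg
  have hXdiag : ptrace2 d (outer ψ) - (d : ℂ)⁻¹ • 1 = V * Matrix.diagonal g * Vᴴ := by
    rw [hpt, hspec]
    have h1 : ((d : ℂ)⁻¹ • (1 : Matrix (Fin d) (Fin d) ℂ)) = V * ((d : ℂ)⁻¹ • 1) * Vᴴ := by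
      rw [Matrix.mul_smul, Matrix.mul_one, Matrix.smul_mul, hVVH]
    rw [h1, ← Matrix.sub_mul, ← Matrix.mul_sub]
    congr 2
    ext i j
    by_cases hij : i = j
    · subst hij
      simp [Matrix.diagonal_apply_eq, hg, Matrix.smul_apply, Matrix.one_apply]
      try push_cast
      try ring
    · simp [Matrix.diagonal_apply_ne _ hij, hij, Matrix.smul_apply, Matrix.one_apply]
  have hfrob : frobNorm (ptrace2 d (outer ψ) - (d : ℂ)⁻¹ • 1) ^ 2
      = ∑ i, (μ i - (d : ℝ)⁻¹) ^ 2 := by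
    rw [frobNorm_sq_eq_trace, hXdiag]
    have hct : (V * Matrix.diagonal g * Vᴴ)ᴴ = V * Matrix.diagonal (fun i => star (g i)) * Vᴴ := by
      rw [Matrix.conjTranspose_mul, Matrix.conjTranspose_mul, Matrix.conjTranspose_conjTranspose,
        Matrix.diagonal_conjTranspose]
      rw [Matrix.mul_assoc]
      rfl
    rw [hct]
    have hmm : V * Matrix.diagonal g * Vᴴ * (V * Matrix.diagonal (fun i => star (g i)) * Vᴴ)
        = V * Matrix.diagonal (fun i => g i * star (g i)) * Vᴴ := by
      rw [← Matrix.diagonal_mul_diagonal]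
      calc V * Matrix.diagonal g * Vᴴ * (V * Matrix.diagonal (fun i => star (g i)) * Vᴴ)
          = V * Matrix.diagonal g * ((Vᴴ * V) * (Matrix.diagonal (fun i => star (g i)) * Vᴴ)) := by
            simp only [Matrix.mul_assoc]
      _ = V * (Matrix.diagonal g * Matrix.diagonal (fun i => star (g i))) * Vᴴ := by
            rw [hVHV, Matrix.one_mul]
            simp only [Matrix.mul_assoc]
    rw [hmm, Matrix.trace_mul_cycle, hVHV, Matrix.one_mul, Matrix.trace_diagonal]
    rw [Complex.re_sum]
    refine Finset.sum_congr rfl fun i _ => ?_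
    rw [hg, ← starRingEnd_apply, Complex.mul_conj, Complex.ofReal_re, Complex.normSq_ofReal]
    ring
  rw [hfrob]
  -- trace is one
  have hμsum : ∑ i, μ i = 1 := by
    have h2 : (M * Mᴴ).trace = ((∑ q : Fin d × Fin d, Complex.normSq (ψ q) : ℝ) : ℂ) := by
      rw [Matrix.trace]
      push_cast
      rw [Fintype.sum_prod_type]
      refine Finset.sum_congr rfl fun i _ => ?_
      rw [Matrix.diag_apply, Matrix.mul_apply]
      refine Finset.sum_congr rfl fun j _ => ?_
      rw [Matrix.conjTranspose_apply, ← starRingEnd_apply, Complex.mul_conj]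
      rfl
    have h3 : (M * Mᴴ).trace = ((∑ i, μ i : ℝ) : ℂ) := by
      rw [hspec, Matrix.trace_mul_cycle, hVHV, Matrix.one_mul, Matrix.trace_diagonal]
      push_cast
      rfl
    rw [h2, hψ] at h3
    exact_mod_cast h3.symm
  -- final arithmetic
  have key := sum_sqrt_sq_mul_sum_sq μ hμ0 hμsum
  have hsq0 : (0 : ℝ) ≤ ∑ i, μ i ^ 2 := Finset.sum_nonneg fun i _ => sq_nonneg _
  have hsqpos : (0 : ℝ) < ∑ i, μ i ^ 2 := by
    rcases lt_or_eq_of_le hsq0 with h | h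
    · exact h
    · exfalso; rw [← h] at key; nlinarith [key]
  have hdpos : (0 : ℝ) < d := by exact_mod_cast hd
  have hid : 1 + (d : ℝ) * ∑ i, (μ i - (d : ℝ)⁻¹) ^ 2 = (d : ℝ) * ∑ i, μ i ^ 2 := by
    have hexp : ∑ i, (μ i - (d : ℝ)⁻¹) ^ 2
        = (∑ i, μ i ^ 2) - 2 * (d : ℝ)⁻¹ * (∑ i, μ i) + (d : ℝ) * ((d : ℝ)⁻¹) ^ 2 := by
      have : ∀ i, (μ i - (d : ℝ)⁻¹) ^ 2 = μ i ^ 2 - 2 * (d : ℝ)⁻¹ * μ i + ((d : ℝ)⁻¹) ^ 2 := by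
        intro i; ring
      simp only [this, Finset.sum_add_distrib, Finset.sum_sub_distrib, ← Finset.mul_sum,
        Finset.sum_const, Finset.card_univ, Fintype.card_fin, nsmul_eq_mul]
    rw [hexp, hμsum]
    field_simp
    ring
  rw [hid, div_le_div_iff₀ (by positivity) hdpos]
  nlinarith [key, hdpos]


end

lemma rho_decomp (d : ℕ) (ρ : Matrix (Fin d × Fin d) (Fin d × Fin d) ℂ)
    (hρ : ρ.PosSemidef) (hρtr : ρ.trace = 1) :
    ∃ (p : Fin (d*d) → ℝ) (ψ : Fin (d*d) → (Fin d × Fin d) → ℂ),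
      (∀ j, 0 ≤ p j) ∧ (∑ j, p j = 1) ∧ (∀ j, ∑ q, Complex.normSq (ψ j q) = 1) ∧
      ρ = ∑ j, (p j : ℂ) • outer (ψ j) := by
  classical
  have hH : ρ.IsHermitian := hρ.isHermitian
  set lam : Fin d × Fin d → ℝ := hH.eigenvalues with hlam
  set W : Matrix (Fin d × Fin d) (Fin d × Fin d) ℂ :=
    (hH.eigenvectorUnitary : Matrix (Fin d × Fin d) (Fin d × Fin d) ℂ) with hW
  have hWmem : W ∈ Matrix.unitaryGroup (Fin d × Fin d) ℂ := hH.eigenvectorUnitary.2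
  have hWHW : Wᴴ * W = 1 := by
    rw [← Matrix.star_eq_conjTranspose]
    exact (Unitary.mem_iff.mp hWmem).1
  have hspec : ρ = W * Matrix.diagonal (fun k => (lam k : ℂ)) * Wᴴ := by
    have h := hH.spectral_theorem
    simp only [Unitary.conjStarAlgAut_apply, Unitary.coe_star, Matrix.star_eq_conjTranspose] at h
    exact h
  have hlam0 : ∀ k, 0 ≤ lam k := hρ.eigenvalues_nonneg
  have hlamsum : ∑ k, lam k = 1 := by
    have h3 : ρ.trace = ((∑ k, lam k : ℝ) : ℂ) := by
      rw [hspec, Matrix.trace_mul_cycle, hWHW, Matrix.one_mul, Matrix.trace_diagonal]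
      push_cast
      rfl
    rw [hρtr] at h3
    exact_mod_cast h3.symm
  have hcol : ∀ k, ∑ q, Complex.normSq (W q k) = 1 := by
    intro k
    have h := congrArg (fun X => X k k) hWHW
    simp only [Matrix.mul_apply, Matrix.conjTranspose_apply, Matrix.one_apply_eq] at h
    have h2 : (∑ q, (Complex.normSq (W q k) : ℂ)) = 1 := by
      rw [← h]
      refine Finset.sum_congr rfl fun q _ => ?_
      rw [Complex.normSq_eq_conj_mul_self]
      rfl
    exact_mod_cast h2
  set e : Fin (d*d) ≃ Fin d × Fin d := finProdFinEquiv.symm with he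
  refine ⟨fun j => lam (e j), fun j => fun q => W q (e j), fun j => hlam0 _, ?_, fun j => hcol _, ?_⟩
  · rw [Equiv.sum_comp e lam, hlamsum]
  · have hdecomp : ρ = ∑ k : Fin d × Fin d, (lam k : ℂ) • outer (fun q => W q k) := by
      rw [hspec]
      ext p q
      rw [Matrix.sum_apply, Matrix.mul_apply]
      rw [show (∑ r, (W * Matrix.diagonal (fun k => (lam k : ℂ))) p r * Wᴴ r q)
          = ∑ r, W p r * (lam r : ℂ) * star (W q r) from Finset.sum_congr rfl fun r _ => by
        rw [Matrix.mul_diagonal, Matrix.conjTranspose_apply]]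
      refine Finset.sum_congr rfl fun r _ => ?_
      simp only [Matrix.smul_apply, outer, Matrix.of_apply, smul_eq_mul]
      ring
    rw [hdecomp]
    exact (Equiv.sum_comp e (fun k => (lam k : ℂ) • outer (fun q => W q k))).symm

/-- Lower bound on D in terms of the Frobenius distance to the set 𝓜 of mixtures of
maximally entangled states. -/
theorem DD_ge_sqrt_of_D2dist
    (d : ℕ) (hd : 0 < d)
    (ρ : Matrix (Fin d × Fin d) (Fin d × Fin d) ℂ)
    (hρ : ρ.PosSemidef) (hρtr : ρ.trace = 1) :
    DD d ρ ≥ Real.sqrt ((4 / d) * (1 / (2 - (D2dist d ρ) ^ 2) - 1 / 2)) := by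
  classical
  rw [DD, ge_iff_le]
  apply le_csInf
  · obtain ⟨p₀, ψ₀, h1, h2, h3, h4⟩ := rho_decomp d ρ hρ hρtr
    exact ⟨_, d*d, p₀, ψ₀, h1, h2, h3, h4, rfl⟩
  · rintro x ⟨n, p, ψ, hp0, hp1, hψu, hρeq, hxeq⟩
    set Dr : ℝ := (d : ℝ) with hDrdef
    have hDr : 0 < Dr := by rw [hDrdef]; exact_mod_cast hd
    choose U hUmem hUineq using fun j => exists_good_unitary d hd (ψ j) (hψu j)
    set φ : Fin n → (Fin d × Fin d) → ℂ :=
      fun j => ((U j ⊗ₖ (1 : Matrix (Fin d) (Fin d) ℂ)).mulVec (maxEnt d)) with hφdef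
    have hφu : ∀ j, ∑ q, Complex.normSq (φ j q) = 1 :=
      fun j => kron_maxEnt_norm d hd (U j) (hUmem j)
    set σ : Matrix (Fin d × Fin d) (Fin d × Fin d) ℂ :=
      ∑ j, (p j : ℂ) • ((U j ⊗ₖ (1 : Matrix (Fin d) (Fin d) ℂ)) * outer (maxEnt d) *
        (U j ⊗ₖ (1 : Matrix (Fin d) (Fin d) ℂ))ᴴ) with hσdef
    have hσME : σ ∈ MESet d := ⟨n, p, U, hp0, hp1, hUmem, rfl⟩
    have hσ : σ = ∑ j, (p j : ℂ) • outer (φ j) := by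
      rw [hσdef]
      exact Finset.sum_congr rfl fun j _ => by rw [conj_outer]
    have hsub : ρ - σ = ∑ j, (p j : ℂ) • (outer (ψ j) - outer (φ j)) := by
      rw [hρeq, hσ, ← Finset.sum_sub_distrib]
      exact Finset.sum_congr rfl fun j _ => (smul_sub _ _ _).symm
    set s : Fin n → ℝ := fun j => frobNorm (ptrace2 d (outer (ψ j)) - (d : ℂ)⁻¹ • 1) with hsdef
    set u : Fin n → ℝ := fun j => Real.sqrt 2 * s j with hudef
    have hs0 : ∀ j, 0 ≤ s j := fun j => frobNorm_nonneg _
    have hu0 : ∀ j, 0 ≤ u j := fun j => mul_nonneg (Real.sqrt_nonneg _) (hs0 j)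
    set t : ℝ := ∑ j, p j * u j with htdef
    have hxt : x = t := hxeq
    have ht0 : 0 ≤ t := Finset.sum_nonneg fun j _ => mul_nonneg (hp0 j) (hu0 j)
    have h2t : (0:ℝ) < 2 + Dr*t^2 := by positivity
    have hstep : ∀ j, frobNorm (outer (ψ j) - outer (φ j)) ≤
        Real.sqrt (2*Dr) * (2*(u j) + Dr*t^3) / ((2+Dr*t^2) * Real.sqrt (2+Dr*t^2)) := by
      intro j
      have hF := hUineq j
      have hsq : frobNorm (outer (ψ j) - outer (φ j)) ^ 2
          = 2 - 2 * Complex.normSq (∑ q, star (φ j q) * ψ j q) :=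
        outer_sub_outer_sq (ψ j) (φ j) (hψu j) (hφu j)
      have huj : (u j)^2 = 2 * (s j)^2 := by
        rw [hudef]
        simp only [mul_pow]
        rw [Real.sq_sqrt (by norm_num : (0:ℝ) ≤ 2)]
      have h1p : (0:ℝ) < 1 + Dr * (s j)^2 := by positivity
      have hbound : 2 - 2 * Complex.normSq (∑ q, star (φ j q) * ψ j q)
          ≤ 2*Dr*(u j)^2/(2+Dr*(u j)^2) := by
        have hF' : 1/(1 + Dr*(s j)^2) ≤ Complex.normSq (∑ q, star (φ j q) * ψ j q) := hF
        have heq : 2 - 2*(1/(1+Dr*(s j)^2)) = 2*Dr*(u j)^2/(2+Dr*(u j)^2) := by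
          rw [huj]
          field_simp
          ring
        linarith
      have hfn0 : 0 ≤ frobNorm (outer (ψ j) - outer (φ j)) := frobNorm_nonneg _
      have hle : frobNorm (outer (ψ j) - outer (φ j))
          ≤ Real.sqrt (2*Dr*(u j)^2/(2+Dr*(u j)^2)) := by
        rw [Real.le_sqrt hfn0 (by positivity)]
        rw [hsq]
        exact hbound
      exact hle.trans (tangent_bound Dr (u j) t hDr (hu0 j) ht0)
    have hsum : frobNorm (ρ - σ)
        ≤ Real.sqrt (2*Dr) * (2*t + Dr*t^3) / ((2+Dr*t^2) * Real.sqrt (2+Dr*t^2)) := by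
      rw [hsub]
      refine (frobNorm_sum_le _).trans ?_
      rw [Finset.sum_congr rfl (fun j _ => frobNorm_real_smul (p j) (hp0 j) _)]
      calc ∑ j, p j * frobNorm (outer (ψ j) - outer (φ j))
          ≤ ∑ j, p j * (Real.sqrt (2*Dr) * (2*(u j) + Dr*t^3)
              / ((2+Dr*t^2) * Real.sqrt (2+Dr*t^2))) :=
            Finset.sum_le_sum fun j _ => mul_le_mul_of_nonneg_left (hstep j) (hp0 j)
      _ = Real.sqrt (2*Dr) * (2*t + Dr*t^3) / ((2+Dr*t^2) * Real.sqrt (2+Dr*t^2)) := by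
            rw [show ∀ (z : Fin n → ℝ), (∑ j, z j) = ∑ j, z j from fun z => rfl]
            have hterm : ∀ j, p j * (Real.sqrt (2*Dr) * (2*(u j) + Dr*t^3)
                / ((2+Dr*t^2) * Real.sqrt (2+Dr*t^2)))
                = (Real.sqrt (2*Dr) / ((2+Dr*t^2) * Real.sqrt (2+Dr*t^2)))
                    * (2*(p j * u j) + Dr*t^3 * p j) := by
              intro j; ring
            rw [Finset.sum_congr rfl (fun j _ => hterm j), ← Finset.mul_sum]
            rw [Finset.sum_add_distrib, ← Finset.mul_sum, ← Finset.mul_sum, ← htdef, hp1]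
            ring
    have hgt : Real.sqrt (2*Dr) * (2*t + Dr*t^3) / ((2+Dr*t^2) * Real.sqrt (2+Dr*t^2))
        = Real.sqrt (2*Dr*t^2/(2+Dr*t^2)) := by
      rw [Real.sqrt_div (by positivity : (0:ℝ) ≤ 2*Dr*t^2)]
      rw [show (2*Dr*t^2 : ℝ) = (2*Dr) * t^2 from by ring, Real.sqrt_mul (by positivity) (t^2),
        Real.sqrt_sq ht0]
      have hsne : Real.sqrt (2+Dr*t^2) ≠ 0 := by positivity
      field_simp
    have hD2le : D2dist d ρ ≤ Real.sqrt (2*Dr*t^2/(2+Dr*t^2)) := by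
      refine le_trans (csInf_le ?_ ?_) (le_trans hsum (le_of_eq hgt))
      · exact ⟨0, fun y hy => by obtain ⟨σ', _, rfl⟩ := hy; exact frobNorm_nonneg _⟩
      · exact ⟨σ, hσME, rfl⟩
    have hD20 : 0 ≤ D2dist d ρ :=
      Real.sInf_nonneg fun y hy => by obtain ⟨σ', _, rfl⟩ := hy; exact frobNorm_nonneg _
    have hD2sq : (D2dist d ρ)^2 ≤ 2*Dr*t^2/(2+Dr*t^2) := by
      have h := pow_le_pow_left₀ hD20 hD2le 2
      rwa [Real.sq_sqrt (by positivity)] at h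
    rw [hxt, ← Real.sqrt_sq ht0]
    apply Real.sqrt_le_sqrt
    set q : ℝ := (D2dist d ρ)^2 with hqdef
    have hq0 : 0 ≤ q := sq_nonneg _
    have hkey : 4/(2+Dr*t^2) ≤ 2 - q := by
      have hiden : 2*Dr*t^2/(2+Dr*t^2) = 2 - 4/(2+Dr*t^2) := by
        field_simp
        ring
      rw [hiden] at hD2sq
      linarith
    have hq2 : 0 < 2 - q := lt_of_lt_of_le (by positivity) hkey
    have hinv : 1/(2-q) ≤ (2+Dr*t^2)/4 := by
      rw [div_le_div_iff₀ hq2 (by norm_num : (0:ℝ) < 4)]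
      rw [div_le_iff₀ h2t] at hkey
      nlinarith [hkey]
    have h2cast : (4 / (d:ℝ)) = 4 / Dr := rfl
    rw [h2cast]
    calc (4/Dr) * (1/(2-q) - 1/2) ≤ (4/Dr) * ((2+Dr*t^2)/4 - 1/2) := by
          apply mul_le_mul_of_nonneg_left _ (by positivity)
          linarith
    _ = t^2 := by field_simp; ring
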